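/- Let k be a positive integer not divisible by 6. Then the determinant of the Wendt matrix W_k = Circ(binom(k,0), binom(k,1), ..., binom(k,k-1)) is nonzero, and det(W_k) = 0 when 6 divides k. -/

import Mathlib

open Matrix Finset

private lemma pow_val_mod {k : ℕ} {ω : ℂ} (h : ω ^ k = 1) (n : ℕ) :
    ω ^ (n % k) = ω ^ n := by
  conv_rhs => rw [← Nat.mod_add_div n k]
  rw [pow_add, pow_mul, h, one_pow, mul_one]

/-- Circulant determinant as product of eigenvalues. -/
private lemma circulant_det_eq {k : ℕ} (hk : 0 < k) (a : Fin k → ℂ) {ω : ℂ}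
    (hω : IsPrimitiveRoot ω k) :
    (Matrix.circulant a).det =
      ∏ j : Fin k, ∑ t : Fin k, a t * ((ω ^ (j : ℕ))⁻¹) ^ (t : ℕ) := by
  haveI : NeZero k := ⟨hk.ne'⟩
  have hω1 : ω ^ k = 1 := hω.pow_eq_one
  have hωne : ω ≠ 0 := by
    intro h
    rw [h, zero_pow hk.ne'] at hω1
    exact zero_ne_one hω1
  set V : Matrix (Fin k) (Fin k) ℂ := Matrix.vandermonde (fun i : Fin k => ω ^ (i : ℕ)) with hV
  set lam : Fin k → ℂ := fun j => ∑ t : Fin k, a t * ((ω ^ (j : ℕ))⁻¹) ^ (t : ℕ) with hlam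
  have key : (Matrix.circulant a) * V = V * Matrix.diagonal lam := by
    ext i j
    rw [Matrix.mul_apply, Matrix.mul_diagonal]
    have hre : ∑ m : Fin k, Matrix.circulant a i m * V m j
        = ∑ t : Fin k, a t * (ω ^ ((i - t : Fin k) : ℕ)) ^ (j : ℕ) := by
      refine Fintype.sum_equiv (Equiv.subLeft i) _ _ (fun t => ?_)
      simp only [Equiv.subLeft_apply, Matrix.circulant_apply, hV, Matrix.vandermonde]
      rw [sub_sub_cancel]
      rfl
    rw [hre, hlam, Finset.mul_sum]
    refine Finset.sum_congr rfl (fun t _ => ?_)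
    have hmain : (ω ^ ((i - t : Fin k) : ℕ)) ^ (j : ℕ) * (ω ^ (t : ℕ)) ^ (j : ℕ)
        = (ω ^ (i : ℕ)) ^ (j : ℕ) := by
      rw [← mul_pow, ← pow_add]
      have : ω ^ (((i - t : Fin k) : ℕ) + (t : ℕ)) = ω ^ (i : ℕ) := by
        rw [← pow_val_mod hω1 (((i - t : Fin k) : ℕ) + (t : ℕ))]
        rw [← Fin.val_add, sub_add_cancel]
      rw [this]
    have hVij : V i j = (ω ^ (i : ℕ)) ^ (j : ℕ) := rfl
    rw [hVij]
    have hinv : ((ω ^ (j : ℕ))⁻¹) ^ (t : ℕ) = ((ω ^ (t : ℕ)) ^ (j : ℕ))⁻¹ := by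
      rw [inv_pow, ← pow_mul, ← pow_mul, Nat.mul_comm]
    have hne : (ω ^ (t : ℕ)) ^ (j : ℕ) ≠ 0 := pow_ne_zero _ (pow_ne_zero _ hωne)
    rw [hinv, ← hmain]
    field_simp
  have hdV : V.det ≠ 0 := by
    rw [hV, Matrix.det_vandermonde]
    refine Finset.prod_ne_zero_iff.mpr (fun i _ => ?_)
    refine Finset.prod_ne_zero_iff.mpr (fun j hj => ?_)
    rw [Finset.mem_Ioi] at hj
    refine sub_ne_zero.mpr (fun h => ?_)
    exact absurd (hω.pow_inj j.isLt i.isLt h) (by omega)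
  have := congrArg Matrix.det key
  rw [Matrix.det_mul, Matrix.det_mul, Matrix.det_diagonal, mul_comm] at this
  exact mul_left_cancel₀ hdV this

private lemma sum_choose_eval {k : ℕ} (x : ℂ) (hx : x ^ k = 1) :
    ∑ t : Fin k, (k.choose (t : ℕ) : ℂ) * x ^ (t : ℕ) = (1 + x) ^ k - 1 := by
  have h := add_pow x 1 k
  simp only [one_pow, mul_one] at h
  rw [Finset.sum_range_succ, Nat.choose_self, Nat.cast_one, mul_one, hx] at h
  rw [Fin.sum_univ_eq_sum_range (fun t => (k.choose t : ℂ) * x ^ t)]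
  have : ∑ t ∈ Finset.range k, (k.choose t : ℂ) * x ^ t
      = ∑ t ∈ Finset.range k, x ^ t * (k.choose t : ℂ) := by
    exact Finset.sum_congr rfl fun t _ => mul_comm _ _
  rw [this]
  linear_combination -h

/-- If z and 1+z are both k-th roots of unity then 6 ∣ k. -/
private lemma six_dvd_aux {k : ℕ} (hk : 0 < k) {z : ℂ}
    (h1 : z ^ k = 1) (h2 : (1 + z) ^ k = 1) : 6 ∣ k := by
  have habs : ‖z‖ = 1 := by
    have h := congrArg (‖·‖) h1
    simp only [norm_pow, norm_one] at h
    rcases lt_trichotomy (‖z‖) 1 with hlt | heq | hgt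
    · exact absurd h (by nlinarith [pow_lt_one₀ (norm_nonneg z) hlt hk.ne'])
    · exact heq
    · exact absurd h (by nlinarith [one_lt_pow₀ hgt hk.ne'])
  have habs2 : ‖1 + z‖ = 1 := by
    have h := congrArg (‖·‖) h2
    simp only [norm_pow, norm_one] at h
    rcases lt_trichotomy (‖1 + z‖) 1 with hlt | heq | hgt
    · exact absurd h (by nlinarith [pow_lt_one₀ (norm_nonneg (1 + z)) hlt hk.ne'])
    · exact heq
    · exact absurd h (by nlinarith [one_lt_pow₀ hgt hk.ne'])
  have hn1 : z.re ^ 2 + z.im ^ 2 = 1 := by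
    have := Complex.sq_norm z
    rw [habs, Complex.normSq_apply] at this
    nlinarith
  have hn2 : (1 + z.re) ^ 2 + z.im ^ 2 = 1 := by
    have := Complex.sq_norm (1 + z)
    rw [habs2, Complex.normSq_apply] at this
    simp only [Complex.add_re, Complex.add_im, Complex.one_re, Complex.one_im, zero_add] at this
    nlinarith
  have hre : z.re = -(1/2) := by nlinarith
  have him : z.im ^ 2 = 3/4 := by nlinarith
  have hquad : z ^ 2 + z + 1 = 0 := by
    apply Complex.ext
    · simp only [Complex.add_re, Complex.one_re, Complex.zero_re, pow_two, Complex.mul_re]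
      nlinarith
    · simp only [Complex.add_im, Complex.one_im, Complex.zero_im, pow_two, Complex.mul_im]
      nlinarith
  set d : ℂ := 1 + z with hd
  have hd2 : d ^ 2 = z := by rw [hd]; linear_combination hquad
  have hd3 : d ^ 3 = -1 := by rw [hd]; linear_combination (2 + z) * hquad
  have hd6 : d ^ 6 = 1 := by
    have : d ^ 6 = (d ^ 3) ^ 2 := by ring
    rw [this, hd3]; ring
  have hzne : z.re ≠ 1 := by rw [hre]; norm_num
  have hmod : d ^ (k % 6) = 1 := by
    conv_rhs => rw [← h2]
    conv_rhs => rw [← Nat.mod_add_div k 6, pow_add, pow_mul, hd6, one_pow, mul_one]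
  have hr : k % 6 < 6 := Nat.mod_lt k (by norm_num)
  interval_cases h : k % 6
  · exact Nat.dvd_of_mod_eq_zero h
  · rw [pow_one, hd] at hmod
    have : z = 0 := by linear_combination hmod
    rw [this] at hre; norm_num at hre
  · rw [hd2] at hmod
    have := congrArg Complex.re hmod
    rw [Complex.one_re] at this; exact absurd this hzne
  · rw [hd3] at hmod; norm_num at hmod
  · have : d ^ 4 = -d := by
      have : d ^ 4 = d ^ 3 * d := by ring
      rw [this, hd3]; ring
    rw [this] at hmod
    have hz : z = -2 := by rw [hd] at hmod; linear_combination -hmod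
    rw [hz] at hre; norm_num at hre
  · have : d ^ 5 = -z := by
      have h5 : d ^ 5 = d ^ 3 * d ^ 2 := by ring
      rw [h5, hd3, hd2]; ring
    rw [this] at hmod
    have hz : z = -1 := by linear_combination -hmod
    rw [hz] at hre; norm_num at hre

theorem stmt7 (k : ℕ) (hk : 0 < k) :
    (¬ (6 ∣ k) → (Matrix.circulant (fun i : Fin k => (k.choose i.val : ℚ))).det ≠ 0) ∧
    (6 ∣ k → (Matrix.circulant (fun i : Fin k => (k.choose i.val : ℚ))).det = 0) := by
  haveI : NeZero k := ⟨hk.ne'⟩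
  obtain ⟨ω, hω⟩ : ∃ ω : ℂ, IsPrimitiveRoot ω k :=
    ⟨_, Complex.isPrimitiveRoot_exp k hk.ne'⟩
  have hω1 : ω ^ k = 1 := hω.pow_eq_one
  set f : ℚ →+* ℂ := algebraMap ℚ ℂ with hf
  have hmap : f.mapMatrix (Matrix.circulant (fun i : Fin k => (k.choose i.val : ℚ)))
      = Matrix.circulant (fun i : Fin k => (k.choose i.val : ℂ)) := by
    ext i j
    simp [Matrix.circulant_apply]
  have hdet : f (Matrix.circulant (fun i : Fin k => (k.choose i.val : ℚ))).det
      = ∏ j : Fin k, ((1 + (ω ^ (j : ℕ))⁻¹) ^ k - 1) := by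
    rw [RingHom.map_det, hmap, circulant_det_eq hk _ hω]
    refine Finset.prod_congr rfl (fun j _ => ?_)
    have hx : ((ω ^ (j : ℕ))⁻¹) ^ k = 1 := by
      rw [inv_pow, ← pow_mul, Nat.mul_comm, pow_mul, hω1, one_pow, inv_one]
    exact sum_choose_eval _ hx
  constructor
  · intro h6 hdet0
    rw [hdet0, map_zero] at hdet
    obtain ⟨j, _, hj⟩ := Finset.prod_eq_zero_iff.mp hdet.symm
    have hx : ((ω ^ (j : ℕ))⁻¹) ^ k = 1 := by
      rw [inv_pow, ← pow_mul, Nat.mul_comm, pow_mul, hω1, one_pow, inv_one]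
    have h2 : (1 + (ω ^ (j : ℕ))⁻¹) ^ k = 1 := by linear_combination hj
    exact h6 (six_dvd_aux hk hx h2)
  · intro h6
    have h3 : 3 ∣ k := dvd_trans (by norm_num) h6
    have hjlt : k / 3 < k := Nat.div_lt_self hk (by norm_num)
    set j : Fin k := ⟨k / 3, hjlt⟩ with hj
    set z : ℂ := (ω ^ (j : ℕ))⁻¹ with hz
    have hz3 : z ^ 3 = 1 := by
      rw [hz, inv_pow, ← pow_mul]
      have : (j : ℕ) * 3 = k := by
        simp only [hj]
        omega
      rw [this, hω1, inv_one]
    have hzne1 : z ≠ 1 := by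
      intro h
      rw [hz, inv_eq_one] at h
      have := hω.dvd_of_pow_eq_one _ h
      simp only [hj] at this
      have h0 : 0 < k / 3 := Nat.div_pos (Nat.le_of_dvd hk h3) (by norm_num)
      exact absurd (Nat.le_of_dvd h0 this) (by omega)
    have hquad : z ^ 2 + z + 1 = 0 := by
      have hfac : (z - 1) * (z ^ 2 + z + 1) = 0 := by linear_combination hz3
      rcases mul_eq_zero.mp hfac with h | h
      · exact absurd (sub_eq_zero.mp h) hzne1
      · exact h
    have hd6 : (1 + z) ^ 6 = 1 := by
      have h2 : (1 + z) ^ 2 = z := by linear_combination hquad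
      have : (1 + z) ^ 6 = ((1 + z) ^ 2) ^ 3 := by ring
      rw [this, h2, hz3]
    have hdk : (1 + z) ^ k = 1 := by
      obtain ⟨c, hc⟩ := h6
      rw [hc, pow_mul, hd6, one_pow]
    have hprod0 : ∏ j' : Fin k, ((1 + (ω ^ (j' : ℕ))⁻¹) ^ k - 1) = 0 :=
      Finset.prod_eq_zero (Finset.mem_univ j) (by rw [← hz, hdk, sub_self])
    rw [hprod0] at hdet
    exact (map_eq_zero_iff f f.injective).mp hdet
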